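/- Generalization of the structural constraint (Proposition 1): with ω defined by the recursion ω_{r_{1:i}} = W^{i+1}_{1:D} + Σ_{k=1}^{i} W^{i+1}_{D+k} · r_k · ω_{r_{1:k−1}}, if two patterns r_{1:i}, r'_{1:i} ∈ {0,1}^i differ exactly in coordinates j_1 < j_2 < ... < j_n, then there exist scalars α_1,...,α_n ∈ ℝ such that ω_{r_{1:i}} − ω_{r'_{1:i}} = Σ_{k=1}^{n} α_k · ω_{r_{1:j_k−1}}. -/
import Mathlib


/-- The decision weights of the oblique decision tree induced by a locally
constant network with one neuron per layer. -/
noncomputable def omega {D : ℕ} (W1 : Fin D → ℝ) (Win : ℕ → Fin D → ℝ)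
    (Wrec : ℕ → ℕ → ℝ) (r : ℕ → Bool) : ℕ → (Fin D → ℝ)
  | 0 => W1
  | (i + 1) => fun j =>
      Win (i + 1) j +
        ∑ k ∈ (Finset.Icc 1 (i + 1)).attach,
          Wrec (i + 1) k.1 * (if r k.1 then 1 else 0) *
            omega W1 Win Wrec r (k.1 - 1) j
  decreasing_by
    have := Finset.mem_Icc.mp k.2
    omega

lemma omega_succ {D : ℕ} (W1 : Fin D → ℝ) (Win : ℕ → Fin D → ℝ) (Wrec : ℕ → ℕ → ℝ)
    (r : ℕ → Bool) (i : ℕ) (idx : Fin D) :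
    omega W1 Win Wrec r (i+1) idx = Win (i + 1) idx +
        ∑ k ∈ Finset.Icc 1 (i + 1),
          Wrec (i + 1) k * (if r k then 1 else 0) *
            omega W1 Win Wrec r (k - 1) idx := by
  rw [omega]
  exact congrArg _ (Finset.sum_attach (Finset.Icc 1 (i+1))
    (fun k => Wrec (i+1) k * (if r k then 1 else 0) * omega W1 Win Wrec r (k-1) idx))

lemma omega_aux {D : ℕ} (W1 : Fin D → ℝ) (Win : ℕ → Fin D → ℝ) (Wrec : ℕ → ℕ → ℝ)
    (r r' : ℕ → Bool) :
    ∀ i : ℕ, ∀ J : Finset ℕ, J ⊆ Finset.Icc 1 i →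
    (∀ k ∈ Finset.Icc 1 i, (r k = r' k ↔ k ∉ J)) →
    ∃ α : ℕ → ℝ, ∀ idx : Fin D,
      omega W1 Win Wrec r i idx - omega W1 Win Wrec r' i idx
        = ∑ j ∈ J, α j * omega W1 Win Wrec r (j - 1) idx := by
  intro i
  induction i using Nat.strong_induction_on with
  | _ i IH =>
    intro J hJ hdiff
    match i with
    | 0 =>
      have hJ0 : J = ∅ := Finset.subset_empty.mp (by simpa using hJ)
      refine ⟨0, fun idx => ?_⟩
      simp [hJ0, omega]
    | i + 1 =>
      -- coefficients from the induction hypothesis at each level k-1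
      have hβ : ∀ k : ℕ, ∃ β : ℕ → ℝ, k ∈ Finset.Icc 1 (i+1) → ∀ idx : Fin D,
          omega W1 Win Wrec r (k-1) idx - omega W1 Win Wrec r' (k-1) idx
            = ∑ j ∈ J.filter (· < k), β j * omega W1 Win Wrec r (j - 1) idx := by
        intro k
        by_cases hk : k ∈ Finset.Icc 1 (i+1)
        · obtain ⟨hk1, hk2⟩ := Finset.mem_Icc.mp hk
          have hlt : k - 1 < i + 1 := by omega
          have hsub : J.filter (· < k) ⊆ Finset.Icc 1 (k-1) := by
            intro j hj
            rw [Finset.mem_filter] at hj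
            have := Finset.mem_Icc.mp (hJ hj.1)
            rw [Finset.mem_Icc]; omega
          have hd : ∀ m ∈ Finset.Icc 1 (k-1), (r m = r' m ↔ m ∉ J.filter (· < k)) := by
            intro m hm
            obtain ⟨hm1, hm2⟩ := Finset.mem_Icc.mp hm
            have hmI : m ∈ Finset.Icc 1 (i+1) := Finset.mem_Icc.mpr ⟨hm1, by omega⟩
            rw [hdiff m hmI, Finset.mem_filter]
            constructor
            · intro h hc; exact h hc.1
            · intro h hc; exact h ⟨hc, by omega⟩
          obtain ⟨β, hb⟩ := IH (k-1) hlt (J.filter (· < k)) hsub hd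
          exact ⟨β, fun _ => hb⟩
        · exact ⟨0, fun h => absurd h hk⟩
      choose β hβ using hβ
      set ρ : ℕ → ℝ := fun k => if r k then 1 else 0 with hρ
      set ρ' : ℕ → ℝ := fun k => if r' k then 1 else 0 with hρ'
      refine ⟨fun j => ∑ k ∈ Finset.Icc 1 (i+1), Wrec (i+1) k *
          ((if j = k then ρ k - ρ' k else 0) + ρ' k * (if j < k then β k j else 0)),
        fun idx => ?_⟩
      rw [omega_succ, omega_succ]
      have hLHS : Win (i+1) idx + (∑ k ∈ Finset.Icc 1 (i+1),
              Wrec (i+1) k * ρ k * omega W1 Win Wrec r (k-1) idx)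
          - (Win (i+1) idx + ∑ k ∈ Finset.Icc 1 (i+1),
              Wrec (i+1) k * ρ' k * omega W1 Win Wrec r' (k-1) idx)
          = ∑ k ∈ Finset.Icc 1 (i+1), (Wrec (i+1) k * ρ k * omega W1 Win Wrec r (k-1) idx
              - Wrec (i+1) k * ρ' k * omega W1 Win Wrec r' (k-1) idx) := by
        rw [Finset.sum_sub_distrib]; ring
      rw [hLHS]
      -- swap sums on the RHS
      rw [show (∑ j ∈ J, (∑ k ∈ Finset.Icc 1 (i+1), Wrec (i+1) k *
          ((if j = k then ρ k - ρ' k else 0) + ρ' k * (if j < k then β k j else 0)))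
            * omega W1 Win Wrec r (j-1) idx)
          = ∑ k ∈ Finset.Icc 1 (i+1), ∑ j ∈ J, Wrec (i+1) k *
            ((if j = k then ρ k - ρ' k else 0) + ρ' k * (if j < k then β k j else 0))
            * omega W1 Win Wrec r (j-1) idx from by
        rw [Finset.sum_comm]
        exact Finset.sum_congr rfl fun j _ => Finset.sum_mul ..]
      refine Finset.sum_congr rfl fun k hk => ?_
      have h1 : ∑ j ∈ J, (if j = k then ρ k - ρ' k else 0) * omega W1 Win Wrec r (j-1) idx
          = (ρ k - ρ' k) * omega W1 Win Wrec r (k-1) idx := by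
        rw [Finset.sum_eq_single k]
        · simp
        · intro j _ hj; simp [hj]
        · intro hkJ
          have : r k = r' k := (hdiff k hk).mpr hkJ
          simp [hρ, hρ', this]
      have h2 : ∑ j ∈ J, (ρ' k * (if j < k then β k j else 0)) * omega W1 Win Wrec r (j-1) idx
          = ρ' k * (omega W1 Win Wrec r (k-1) idx - omega W1 Win Wrec r' (k-1) idx) := by
        rw [hβ k hk idx, Finset.sum_filter, Finset.mul_sum]
        refine Finset.sum_congr rfl fun j _ => ?_
        by_cases h : j < k <;> simp [h] <;> ring
      have expand : ∑ j ∈ J, Wrec (i+1) k *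
            ((if j = k then ρ k - ρ' k else 0) + ρ' k * (if j < k then β k j else 0))
            * omega W1 Win Wrec r (j-1) idx
          = Wrec (i+1) k * ((∑ j ∈ J, (if j = k then ρ k - ρ' k else 0)
              * omega W1 Win Wrec r (j-1) idx)
            + ∑ j ∈ J, (ρ' k * (if j < k then β k j else 0)) * omega W1 Win Wrec r (j-1) idx) := by
        rw [← Finset.sum_add_distrib, Finset.mul_sum]
        exact Finset.sum_congr rfl fun j _ => by ring
      rw [expand, h1, h2]
      ring

/-- Proposition 1: if two depth-i patterns differ exactly in the
coordinates of J ⊆ {1,…,i}, the weight difference is a linear combination of the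
weights ω_{r_{1:j−1}} for j ∈ J. -/
theorem omega_structural_constraint_general {D : ℕ} (W1 : Fin D → ℝ)
    (Win : ℕ → Fin D → ℝ) (Wrec : ℕ → ℕ → ℝ)
    (i : ℕ) (J : Finset ℕ) (hJ : J ⊆ Finset.Icc 1 i)
    (r r' : ℕ → Bool)
    (hdiff : ∀ k ∈ Finset.Icc 1 i, (r k = r' k ↔ k ∉ J)) :
    ∃ α : ℕ → ℝ, ∀ idx : Fin D,
      omega W1 Win Wrec r i idx - omega W1 Win Wrec r' i idx
        = ∑ j ∈ J, α j * omega W1 Win Wrec r (j - 1) idx :=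
  omega_aux W1 Win Wrec r r' i J hJ hdiff
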